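/- arXiv:1802.07639 — 2 statements merged into one kernel-verified Lean document; each statement's English description precedes it below -/
import Mathlib

section
/- Let V be a real vector space of dimension 4, α a nonzero linear functional on V, and ω a skew-symmetric bilinear form on V such that α ∧ ω ≠ 0 (i.e., the wedge of α with ω is a nonzero element of Λ³V*). Then the restriction of ω to the 3-dimensional subspace ker α has exactly a 1-dimensional kernel. -/
set_option maxHeartbeats 1000000


/-- if `V` is a 4-dimensional real vector space, `α` a nonzero linear functional,
and `ω` a skew-symmetric bilinear form with `α ∧ ω ≠ 0` (as an element of `Λ³V*`), then the
kernel of the restriction of `ω` to the hyperplane `ker α` is exactly 1-dimensional. -/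
theorem isotropic_line_of_even_contact
    (V : Type*) [AddCommGroup V] [Module ℝ V] [FiniteDimensional ℝ V]
    (hdim : Module.finrank ℝ V = 4)
    (α : V →ₗ[ℝ] ℝ) (hα : α ≠ 0)
    (ω : V →ₗ[ℝ] V →ₗ[ℝ] ℝ)
    (hskew : ∀ u v : V, ω u v = - ω v u)
    (hwedge : ∃ u v w : V, α u * ω v w - α v * ω u w + α w * ω u v ≠ 0) :
    Module.finrank ℝ
      ↥(LinearMap.ker α ⊓
        LinearMap.ker (((LinearMap.ker α).subtype.lcomp ℝ ℝ).comp ω)) = 1 := by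
  classical
  set H := LinearMap.ker α with hHdef
  set L := ((LinearMap.ker α).subtype.lcomp ℝ ℝ).comp ω with hLdef
  set K := LinearMap.ker α ⊓ LinearMap.ker L with hKdef
  have hself : ∀ x : V, ω x x = 0 := by
    intro x; have := hskew x x; linarith
  -- range of α is everything
  have hrange : LinearMap.range α = ⊤ := by
    rcases Ideal.eq_bot_or_top (LinearMap.range α : Ideal ℝ) with h | h
    · exact absurd (LinearMap.range_eq_bot.mp h) hα
    · exact h
  have hH3 : Module.finrank ℝ H = 3 := by
    have h1 := LinearMap.finrank_range_add_finrank_ker α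
    rw [hrange, finrank_top, hdim, Module.finrank_self, ← hHdef] at h1
    omega
  -- K is a submodule of H
  have hKH : K ≤ H := inf_le_left
  -- membership in ker L gives vanishing
  have hmemL : ∀ x : V, x ∈ LinearMap.ker L → ∀ y : V, y ∈ H → ω x y = 0 := by
    intro x hx y hy
    have : L x = 0 := hx
    have h2 := DFunLike.congr_fun this ⟨y, hy⟩
    simpa [hLdef] using h2
  -- Lower bound: K ≠ ⊥
  have hexist : ∃ z : V, z ∈ K ∧ z ≠ 0 := by
    obtain ⟨b⟩ : Nonempty (Module.Basis (Fin 3) ℝ ↥H) := ⟨Module.finBasisOfFinrankEq ℝ H hH3⟩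
    set A : Matrix (Fin 3) (Fin 3) ℝ := Matrix.of fun i j => ω (b i) (b j) with hAdef
    have hdetA : A.det = 0 := by
      have h1 : A.det = (-A).det := by
        have hAt : A.transpose = -A := by
          ext i j
          simp only [Matrix.transpose_apply, Matrix.neg_apply, hAdef, Matrix.of_apply]
          exact (hskew _ _)
        rw [← hAt, Matrix.det_transpose]
      have h2 : (-A).det = -A.det := by
        rw [Matrix.det_neg]; norm_num
      rw [h2] at h1
      linarith
    obtain ⟨v, hv0, hv⟩ := (Matrix.exists_mulVec_eq_zero_iff).mpr hdetA
    set h : ↥H := ∑ j, v j • b j with hhdef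
    have hne : h ≠ 0 := by
      intro h0
      apply hv0
      have := Fintype.linearIndependent_iff.mp b.linearIndependent v (by rw [← hhdef, h0])
      funext i; exact this i
    have key : ∀ x : H, ω (x : V) (h : V) = 0 := by
      have hpsi : (((ω.flip (h : V)).comp H.subtype) : H →ₗ[ℝ] ℝ) = 0 := by
        apply b.ext
        intro i
        have hco : ((h : V)) = ∑ j, v j • (b j : V) := by
          rw [hhdef]; push_cast; rfl
        simp only [LinearMap.comp_apply, Submodule.coe_subtype, LinearMap.flip_apply,
          LinearMap.zero_apply, hco, map_sum, map_smul, smul_eq_mul]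
        have := congrFun hv i
        simpa [Matrix.mulVec, dotProduct, hAdef, mul_comm] using this
      intro x
      exact DFunLike.congr_fun hpsi x
    refine ⟨(h : V), ⟨h.2, ?_⟩, by simpa using hne⟩
    show L (h : V) = 0
    ext k
    show ω (h : V) (k : V) = 0
    rw [hskew, key k]; ring
  have hK1 : 1 ≤ Module.finrank ℝ K := by
    obtain ⟨z, hz, hz0⟩ := hexist
    have : (⟨z, hz⟩ : K) ≠ 0 := by simpa using hz0
    have := Module.finrank_pos_iff_exists_ne_zero (R := ℝ) (M := K) |>.mpr ⟨_, this⟩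
    omega
  -- Upper bound
  have hK2 : Module.finrank ℝ K ≤ 1 := by
    by_contra hcon
    push_neg at hcon
    have h2 : 2 ≤ Module.finrank ℝ K := hcon
    -- ω vanishes on H × H
    have hw0 : ∀ x ∈ H, ∀ y ∈ H, ω x y = 0 := by
      intro x hx y hy
      by_cases hxK : x ∈ K
      · exact hmemL x hxK.2 y hy
      · have hx0 : x ≠ 0 := by rintro rfl; exact hxK (K.zero_mem)
        have hinf : K ⊓ Submodule.span ℝ {x} = ⊥ := by
          rw [eq_bot_iff]
          rintro z ⟨hzK, hzx⟩
          obtain ⟨t, rfl⟩ := Submodule.mem_span_singleton.mp hzx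
          rcases eq_or_ne t 0 with rfl | ht
          · simp
          · exfalso; apply hxK
            have : t⁻¹ • (t • x) ∈ K := K.smul_mem _ hzK
            rwa [smul_smul, inv_mul_cancel₀ ht, one_smul] at this
        have hsupleH : K ⊔ Submodule.span ℝ {x} ≤ H :=
          sup_le hKH ((Submodule.span_singleton_le_iff_mem x H).mpr hx)
        have hsup : K ⊔ Submodule.span ℝ {x} = H := by
          refine Submodule.eq_of_le_of_finrank_le hsupleH ?_
          have heq := Submodule.finrank_sup_add_finrank_inf_eq K (Submodule.span ℝ {x})
          rw [hinf, finrank_span_singleton hx0] at heq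
          simp only [finrank_bot, add_zero] at heq
          omega
        have hy' : y ∈ K ⊔ Submodule.span ℝ {x} := by rw [hsup]; exact hy
        rw [Submodule.mem_sup] at hy'
        obtain ⟨k, hk, z, hz, rfl⟩ := hy'
        obtain ⟨t, rfl⟩ := Submodule.mem_span_singleton.mp hz
        have h1 : ω x k = 0 := by
          rw [hskew]; rw [hmemL k hk.2 x hx]; ring
        have hexp : (ω x) (k + t • x) = (ω x) k + t * (ω x) x := by
          rw [map_add, map_smul, smul_eq_mul]
        rw [hexp, h1, hself x]; ring
    -- derive contradiction with hwedge
    obtain ⟨u, v, w, hne⟩ := hwedge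
    apply hne
    obtain ⟨e, he⟩ := LinearMap.range_eq_top.mp hrange 1
    have hmem : ∀ x : V, x - α x • e ∈ H := by
      intro x
      simp [hHdef, LinearMap.mem_ker, he]
    have key : ∀ x y : V, ω x y = α x * ω e y - α y * ω e x := by
      intro x y
      have h0 := hw0 _ (hmem x) _ (hmem y)
      have hxe : ω x e = - ω e x := hskew x e
      simp only [map_sub, map_smul, LinearMap.sub_apply, LinearMap.smul_apply,
        smul_eq_mul, he] at h0
      rw [hself e] at h0
      linear_combination h0 + α y * hxe
    rw [key v w, key u w, key u v]
    ring
  omega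
end

section
/- Let ξ be a smooth plane field on a 3-manifold Y, and let ℰ = ξ ⊕ ℝ·(∂_φ + L) be the hyperplane field on Y × [0,1] obtained from ξ and a vector field L on Y (lifted to the product, with φ the coordinate on [0,1]). If ξ = ker β for a contact form β on Y and L is a contact vector field for ξ (L_L β = f·β), then the 1-form α = β (pulled back to Y × [0,1]) − β(L) dφ satisfies ker α = ℰ and α ∧ dα ≠ 0 everywhere; i.e., ℰ is an even contact structure, and its isotropic foliation is spanned by ∂_φ + L. -/
noncomputable section

/-- The model 3-manifold (a chart of `Y`). -/
abbrev E3 := EuclideanSpace ℝ (Fin 3)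

/-- The Lie derivative of a 1-form `β` along a vector field `L`, via Cartan's formula. -/
def lieDeriv (β : E3 → E3 →L[ℝ] ℝ) (L : E3 → E3) (p : E3) (v : E3) : ℝ :=
  fderiv ℝ β p (L p) v + β p (fderiv ℝ L p v)

/-- The exterior derivative of a 1-form on `E3`. -/
def extDeriv3 (β : E3 → E3 →L[ℝ] ℝ) (p : E3) (u v : E3) : ℝ :=
  fderiv ℝ β p u v - fderiv ℝ β p v u

/-- The 1-form `α = β − β(L) dφ` on the product `Y × [0,1]` (with `φ` the coordinate on the
second factor), whose kernel is `ℰ = ξ ⊕ ℝ(∂_φ + L)`. -/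
def prodForm (β : E3 → E3 →L[ℝ] ℝ) (L : E3 → E3) :
    E3 × ℝ → (E3 × ℝ) →L[ℝ] ℝ :=
  fun q => (β q.1).comp (ContinuousLinearMap.fst ℝ E3 ℝ) -
    (β q.1 (L q.1)) • (ContinuousLinearMap.snd ℝ E3 ℝ)

/-- The exterior derivative of a 1-form on the product `E3 × ℝ`. -/
def extDeriv4 (α : E3 × ℝ → (E3 × ℝ) →L[ℝ] ℝ) (q : E3 × ℝ) (u v : E3 × ℝ) : ℝ :=
  fderiv ℝ α q u v - fderiv ℝ α q v u


lemma pf_apply (β : E3 → E3 →L[ℝ] ℝ) (L : E3 → E3) (q : E3 × ℝ) (z : E3 × ℝ) :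
    prodForm β L q z = β q.1 z.1 - β q.1 (L q.1) * z.2 := by
  simp [prodForm]

lemma pf_diffAt (β : E3 → E3 →L[ℝ] ℝ) (hβ : Differentiable ℝ β)
    (L : E3 → E3) (hL : Differentiable ℝ L) (q : E3 × ℝ) :
    DifferentiableAt ℝ (prodForm β L) q := by
  unfold prodForm
  exact (((hβ q.1).comp q differentiableAt_fst).clm_comp (differentiableAt_const _)).sub
    ((((hβ q.1).comp q differentiableAt_fst).clm_apply
      ((hL q.1).comp q differentiableAt_fst)).smul (differentiableAt_const _))

lemma key (β : E3 → E3 →L[ℝ] ℝ) (hβ : Differentiable ℝ β)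
    (L : E3 → E3) (hL : Differentiable ℝ L) (q : E3 × ℝ) (z w : E3 × ℝ) :
    fderiv ℝ (fun q : E3 × ℝ => prodForm β L q z) q w
      = fderiv ℝ β q.1 w.1 z.1
        - (fderiv ℝ β q.1 w.1 (L q.1) + β q.1 (fderiv ℝ L q.1 w.1)) * z.2 := by
  have h1 : HasFDerivAt (fun q : E3 × ℝ => β q.1)
      ((fderiv ℝ β q.1).comp (ContinuousLinearMap.fst ℝ E3 ℝ)) q :=
    (hβ q.1).hasFDerivAt.comp q hasFDerivAt_fst
  have h2 : HasFDerivAt (fun q : E3 × ℝ => L q.1)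
      ((fderiv ℝ L q.1).comp (ContinuousLinearMap.fst ℝ E3 ℝ)) q :=
    (hL q.1).hasFDerivAt.comp q hasFDerivAt_fst
  have hA := h1.clm_apply (hasFDerivAt_const z.1 q)
  have hB := (h1.clm_apply h2).mul_const z.2
  have hAB : HasFDerivAt (fun q : E3 × ℝ => β q.1 z.1 - β q.1 (L q.1) * z.2) _ q := hA.sub hB
  have heq : (fun q : E3 × ℝ => prodForm β L q z)
      = fun q : E3 × ℝ => β q.1 z.1 - β q.1 (L q.1) * z.2 := by
    funext q; exact pf_apply β L q z
  rw [heq, hAB.fderiv]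
  simp
  ring

lemma bridge (β : E3 → E3 →L[ℝ] ℝ) (hβ : Differentiable ℝ β)
    (L : E3 → E3) (hL : Differentiable ℝ L) (q : E3 × ℝ) (w z : E3 × ℝ) :
    fderiv ℝ (prodForm β L) q w z = fderiv ℝ (fun q : E3 × ℝ => prodForm β L q z) q w := by
  rw [fderiv_clm_apply (pf_diffAt β hβ L hL q) (differentiableAt_const z)]
  simp

lemma ed4 (β : E3 → E3 →L[ℝ] ℝ) (hβ : Differentiable ℝ β)
    (L : E3 → E3) (hL : Differentiable ℝ L) (q : E3 × ℝ) (u v : E3 × ℝ) :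
    extDeriv4 (prodForm β L) q u v
      = extDeriv3 β q.1 u.1 v.1
        - (fderiv ℝ β q.1 u.1 (L q.1) + β q.1 (fderiv ℝ L q.1 u.1)) * v.2
        + (fderiv ℝ β q.1 v.1 (L q.1) + β q.1 (fderiv ℝ L q.1 v.1)) * u.2 := by
  unfold extDeriv4 extDeriv3
  rw [bridge β hβ L hL q u v, bridge β hβ L hL q v u, key β hβ L hL, key β hβ L hL]
  ring

/-- if `ξ = ker β` for a contact form `β` on the 3-manifold `Y` and `L` is a
contact vector field for `ξ` (`L_L β = f·β`), then the 1-form `α = β − β(L) dφ` on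
`Y × [0,1]` satisfies `ker α = ℰ := ξ ⊕ ℝ(∂_φ + L)` and `α ∧ dα ≠ 0` everywhere; i.e. `ℰ`
is an even contact structure, and its isotropic foliation is spanned by `∂_φ + L`. -/
theorem product_even_contact_structure
    (β : E3 → E3 →L[ℝ] ℝ) (hβ : Differentiable ℝ β)
    (hcontact : ∀ p : E3, ∃ u v w : E3,
      β p u * extDeriv3 β p v w - β p v * extDeriv3 β p u w
        + β p w * extDeriv3 β p u v ≠ 0)
    (L : E3 → E3) (hL : Differentiable ℝ L)
    (f : E3 → ℝ) (hLf : ∀ p v, lieDeriv β L p v = f p * β p v) :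
    -- `ker α = ξ ⊕ ℝ(∂_φ + L)`: a vector `(v, s)` lies in `ker α` iff its
    -- `ξ`-component `v − s·L` lies in `ξ = ker β`
    (∀ (q : E3 × ℝ) (v : E3) (s : ℝ),
      prodForm β L q (v, s) = 0 ↔ β q.1 (v - s • L q.1) = 0) ∧
    -- `α ∧ dα ≠ 0` everywhere: `ℰ` is an even contact structure
    (∀ q : E3 × ℝ, ∃ a b c : E3 × ℝ,
      prodForm β L q a * extDeriv4 (prodForm β L) q b c
        - prodForm β L q b * extDeriv4 (prodForm β L) q a c
        + prodForm β L q c * extDeriv4 (prodForm β L) q a b ≠ 0) ∧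
    -- the isotropic foliation is spanned by `∂_φ + L`
    (∀ q : E3 × ℝ,
      prodForm β L q (L q.1, 1) = 0 ∧
      ∀ u : E3 × ℝ, prodForm β L q u = 0 →
        extDeriv4 (prodForm β L) q (L q.1, 1) u = 0) := by
  unfold lieDeriv at hLf
  refine ⟨?_, ?_, ?_⟩
  · intro q v s
    rw [pf_apply]
    simp only [map_sub, map_smul, smul_eq_mul]
    constructor <;> intro h <;> linarith
  · intro q
    obtain ⟨u, v, w, h⟩ := hcontact q.1
    refine ⟨(u, 0), (v, 0), (w, 0), ?_⟩
    rw [ed4 β hβ L hL, ed4 β hβ L hL, ed4 β hβ L hL, pf_apply, pf_apply, pf_apply]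
    simpa using h
  · intro q
    constructor
    · rw [pf_apply]; simp
    · intro u hu
      rw [pf_apply] at hu
      rw [ed4 β hβ L hL]
      unfold extDeriv3
      have h1 := hLf q.1 u.1
      have h2 := hLf q.1 (L q.1)
      linear_combination h1 - u.2 * h2 + f q.1 * hu

end
end
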